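/- arXiv:1508.06899 — 2 statements merged into one kernel-verified Lean document; each statement's English description precedes it below -/
import Mathlib

section
/- For every closed ctACPps+SO process term p there exists a basic term q ∈ B (a basic term of ctBPAps) such that the equation p = q is derivable from the axioms of ctACPps+SO. -/
set_option autoImplicit true
set_option maxHeartbeats 1000000

/-- The three truth values of LP→⊥: true, false, both. -/
inductive V3 : Type
  | t
  | f
  | b
  deriving DecidableEq

/-- Formulas of LP→⊥ over propositional variables of type `α`. -/
inductive Fml (α : Type) : Type
  | var : α → Fml α
  | bot : Fml α
  | neg : Fml α → Fml α
  | conj : Fml α → Fml α → Fml α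
  | disj : Fml α → Fml α → Fml α
  | imp : Fml α → Fml α → Fml α

namespace Fml

/-- ⊤ abbreviates ¬⊥. -/
def top {α : Type} : Fml α := neg bot

/-- A↔B abbreviates (A→B)∧(B→A). -/
def iff' {α : Type} (A B : Fml α) : Fml α := conj (imp A B) (imp B A)

end Fml

/-- LP→⊥ truth table for negation. -/
def negT : V3 → V3
  | .f => .t
  | .t => .f
  | .b => .b

/-- LP→⊥ truth table for conjunction. -/
def conjT : V3 → V3 → V3
  | .f, _ => .f
  | _, .f => .f
  | .t, .t => .t
  | _, _ => .b

/-- LP→⊥ truth table for disjunction. -/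
def disjT : V3 → V3 → V3
  | .t, _ => .t
  | _, .t => .t
  | .f, .f => .f
  | _, _ => .b

/-- LP→⊥ truth table for implication. -/
def impT : V3 → V3 → V3
  | .f, _ => .t
  | _, y => y

/-- The LP→⊥ valuation determined by an assignment `σ` of truth values to variables. -/
def eval {α : Type} (σ : α → V3) : Fml α → V3
  | .var x => σ x
  | .bot => .f
  | .neg A => negT (eval σ A)
  | .conj A B => conjT (eval σ A) (eval σ B)
  | .disj A B => disjT (eval σ A) (eval σ B)
  | .imp A B => impT (eval σ A) (eval σ B)

/-- Logical equivalence in LP→⊥: the same value under every valuation. -/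
def FEquiv {α : Type} (A B : Fml α) : Prop := ∀ σ : α → V3, eval σ A = eval σ B

/-- `φ ∈ [⊥]`: `φ` is logically equivalent to ⊥. -/
def EqBot {α : Type} (φ : Fml α) : Prop := ∀ σ : α → V3, eval σ φ = V3.f

/-- Semantic consequence in LP→⊥ (designated values t and b). -/
def SemCons {α : Type} (Γ : Set (Fml α)) (A : Fml α) : Prop :=
  ∀ σ : α → V3, (∀ C ∈ Γ, eval σ C ≠ V3.f) → eval σ A ≠ V3.f

/-- The Hilbert system of LP→⊥, with hypotheses `Γ`. -/
inductive Hilb {α : Type} (Γ : Set (Fml α)) : Fml α → Prop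
  | hyp {A : Fml α} : A ∈ Γ → Hilb Γ A
  | mp {A B : Fml α} : Hilb Γ (A.imp B) → Hilb Γ A → Hilb Γ B
  | ax1 (A B : Fml α) : Hilb Γ (A.imp (B.imp A))
  | ax2 (A B C : Fml α) : Hilb Γ ((A.imp (B.imp C)).imp ((A.imp B).imp (A.imp C)))
  | ax3 (A B : Fml α) : Hilb Γ (((A.imp B).imp A).imp A)
  | ax4 (A : Fml α) : Hilb Γ (Fml.bot.imp A)
  | ax5 (A B : Fml α) : Hilb Γ ((A.conj B).imp A)
  | ax6 (A B : Fml α) : Hilb Γ ((A.conj B).imp B)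
  | ax7 (A B : Fml α) : Hilb Γ (A.imp (B.imp (A.conj B)))
  | ax8 (A B : Fml α) : Hilb Γ (A.imp (A.disj B))
  | ax9 (A B : Fml α) : Hilb Γ (B.imp (A.disj B))
  | ax10 (A B C : Fml α) : Hilb Γ ((A.imp C).imp ((B.imp C).imp ((A.disj B).imp C)))
  | ax11 (A : Fml α) : Hilb Γ (Fml.iff' A.neg.neg A)
  | ax12 (A B : Fml α) : Hilb Γ (Fml.iff' (A.imp B).neg (A.conj B.neg))
  | ax13 (A B : Fml α) : Hilb Γ (Fml.iff' (A.conj B).neg (A.neg.disj B.neg))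
  | ax14 (A B : Fml α) : Hilb Γ (Fml.iff' (A.disj B).neg (A.neg.conj B.neg))
  | ax15 (A : Fml α) : Hilb Γ (A.disj A.neg)

/-- The internalization (A↔B)∧(¬A↔¬B) of logical equivalence. -/
def InternEq {α : Type} (φ ψ : Fml α) : Fml α :=
  (Fml.iff' φ ψ).conj (Fml.iff' φ.neg ψ.neg)

/-- Derivable equality of propositions: the least congruence containing the
instances of axiom IMP (φ = ψ whenever ⊢ (φ↔ψ)∧(¬φ↔¬ψ)). -/
inductive PropEq {α : Type} : Fml α → Fml α → Prop
  | imp {φ ψ} : Hilb (∅ : Set (Fml α)) (InternEq φ ψ) → PropEq φ ψ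
  | refl (φ) : PropEq φ φ
  | symm {φ ψ} : PropEq φ ψ → PropEq ψ φ
  | trans {φ ψ χ} : PropEq φ ψ → PropEq ψ χ → PropEq φ χ
  | negC {φ ψ} : PropEq φ ψ → PropEq φ.neg ψ.neg
  | conjC {φ ψ φ' ψ'} : PropEq φ ψ → PropEq φ' ψ' → PropEq (φ.conj φ') (ψ.conj ψ')
  | disjC {φ ψ φ' ψ'} : PropEq φ ψ → PropEq φ' ψ' → PropEq (φ.disj φ') (ψ.disj ψ')
  | impC {φ ψ φ' ψ'} : PropEq φ ψ → PropEq φ' ψ' → PropEq (φ.imp φ') (ψ.imp ψ')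

/-- Closed ctACPps process terms (δ is `delta`, ⊗ is `nex`, `gc`/`se` are the
guarded command and signal emission, `par` is ∥, `lm` is left merge ⌊⌊,
`cm` is communication merge |, `encap H` is ∂_H). -/
inductive SPT (α Act S : Type) : Type
  | act : Act → SPT α Act S
  | delta : SPT α Act S
  | nex : SPT α Act S
  | alt : SPT α Act S → SPT α Act S → SPT α Act S
  | seq : SPT α Act S → SPT α Act S → SPT α Act S
  | gc : Fml α → SPT α Act S → SPT α Act S
  | se : Fml α → SPT α Act S → SPT α Act S
  | par : SPT α Act S → SPT α Act S → SPT α Act S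
  | lm : SPT α Act S → SPT α Act S → SPT α Act S
  | cm : SPT α Act S → SPT α Act S → SPT α Act S
  | encap : Set Act → SPT α Act S → SPT α Act S
  | st : S → SPT α Act S → SPT α Act S

/-- The constant corresponding to an element of A ∪ {δ} (encoded as `Option Act`,
with `none` standing for δ). -/
def actd {α Act S : Type} : Option Act → SPT α Act S
  | some a => .act a
  | none => .delta

section
variable {α Act S : Type}

/-- Derivable equality from the axioms of ctACPps (γ is the communication
function on A ∪ {δ}; `a | b` in the axioms stands for γ(a,b), which is the
content of axiom `CF`): the least congruence satisfying A1-A7, NE1-NE3,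
GC1-GC7, SE1-SE8, IMP, CM1-CM9 (with CM2S, CM3S), C1-C3, D1-D4,
GC8S-GC11 and SE9-SE12. -/
inductive SDeriv (γ : Option Act → Option Act → Option Act)
    (actF : Option Act → S → Option Act) (effF : Option Act → S → S)
    (sigF : S → Fml α) :
    SPT α Act S → SPT α Act S → Prop
  | refl (p : SPT α Act S) : SDeriv γ actF effF sigF p p
  | symm {p q} : SDeriv γ actF effF sigF p q → SDeriv γ actF effF sigF q p
  | trans {p q r} : SDeriv γ actF effF sigF p q → SDeriv γ actF effF sigF q r → SDeriv γ actF effF sigF p r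
  | altC {p q p' q'} : SDeriv γ actF effF sigF p q → SDeriv γ actF effF sigF p' q' → SDeriv γ actF effF sigF (.alt p p') (.alt q q')
  | seqC {p q p' q'} : SDeriv γ actF effF sigF p q → SDeriv γ actF effF sigF p' q' → SDeriv γ actF effF sigF (.seq p p') (.seq q q')
  | gcC {φ ψ p q} : PropEq φ ψ → SDeriv γ actF effF sigF p q → SDeriv γ actF effF sigF (.gc φ p) (.gc ψ q)
  | seC {φ ψ p q} : PropEq φ ψ → SDeriv γ actF effF sigF p q → SDeriv γ actF effF sigF (.se φ p) (.se ψ q)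
  | parC {p q p' q'} : SDeriv γ actF effF sigF p q → SDeriv γ actF effF sigF p' q' → SDeriv γ actF effF sigF (.par p p') (.par q q')
  | lmC {p q p' q'} : SDeriv γ actF effF sigF p q → SDeriv γ actF effF sigF p' q' → SDeriv γ actF effF sigF (.lm p p') (.lm q q')
  | cmC {p q p' q'} : SDeriv γ actF effF sigF p q → SDeriv γ actF effF sigF p' q' → SDeriv γ actF effF sigF (.cm p p') (.cm q q')
  | encapC (H : Set Act) {p q} : SDeriv γ actF effF sigF p q → SDeriv γ actF effF sigF (.encap H p) (.encap H q)
  | stC (s : S) {p q} : SDeriv γ actF effF sigF p q →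
      SDeriv γ actF effF sigF (.st s p) (.st s q)
  | A1 (x y : SPT α Act S) : SDeriv γ actF effF sigF (.alt x y) (.alt y x)
  | A2 (x y z : SPT α Act S) : SDeriv γ actF effF sigF (.alt (.alt x y) z) (.alt x (.alt y z))
  | A3 (x : SPT α Act S) : SDeriv γ actF effF sigF (.alt x x) x
  | A4 (x y z : SPT α Act S) : SDeriv γ actF effF sigF (.seq (.alt x y) z) (.alt (.seq x z) (.seq y z))
  | A5 (x y z : SPT α Act S) : SDeriv γ actF effF sigF (.seq (.seq x y) z) (.seq x (.seq y z))
  | A6 (x : SPT α Act S) : SDeriv γ actF effF sigF (.alt x .delta) x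
  | A7 (x : SPT α Act S) : SDeriv γ actF effF sigF (.seq .delta x) .delta
  | NE1 (x : SPT α Act S) : SDeriv γ actF effF sigF (.alt x .nex) .nex
  | NE2 (x : SPT α Act S) : SDeriv γ actF effF sigF (.seq .nex x) .nex
  | NE3 (a : Option Act) : SDeriv γ actF effF sigF (.seq (actd a) .nex) (.delta : SPT α Act S)
  | GC1 (x : SPT α Act S) : SDeriv γ actF effF sigF (.gc Fml.top x) x
  | GC2 (x : SPT α Act S) : SDeriv γ actF effF sigF (.gc .bot x) .delta
  | GC3 (φ : Fml α) : SDeriv γ actF effF sigF (.gc φ .delta) (.delta : SPT α Act S)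
  | GC4 (φ : Fml α) (x y : SPT α Act S) :
      SDeriv γ actF effF sigF (.gc φ (.alt x y)) (.alt (.gc φ x) (.gc φ y))
  | GC5 (φ : Fml α) (x y : SPT α Act S) : SDeriv γ actF effF sigF (.gc φ (.seq x y)) (.seq (.gc φ x) y)
  | GC6 (φ ψ : Fml α) (x : SPT α Act S) : SDeriv γ actF effF sigF (.gc φ (.gc ψ x)) (.gc (φ.conj ψ) x)
  | GC7 (φ ψ : Fml α) (x : SPT α Act S) :
      SDeriv γ actF effF sigF (.gc (φ.disj ψ) x) (.alt (.gc φ x) (.gc ψ x))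
  | SE1 (x : SPT α Act S) : SDeriv γ actF effF sigF (.se Fml.top x) x
  | SE2 (x : SPT α Act S) : SDeriv γ actF effF sigF (.se .bot x) .nex
  | SE3 (φ : Fml α) : SDeriv γ actF effF sigF (.se φ .nex) (.nex : SPT α Act S)
  | SE4 (φ : Fml α) (x y : SPT α Act S) : SDeriv γ actF effF sigF (.alt (.se φ x) y) (.se φ (.alt x y))
  | SE5 (φ : Fml α) (x y : SPT α Act S) : SDeriv γ actF effF sigF (.seq (.se φ x) y) (.se φ (.seq x y))
  | SE6 (φ ψ : Fml α) (x : SPT α Act S) : SDeriv γ actF effF sigF (.se φ (.se ψ x)) (.se (φ.conj ψ) x)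
  | SE7 (φ : Fml α) (x : SPT α Act S) : SDeriv γ actF effF sigF (.se φ (.gc φ x)) (.se φ x)
  | SE8 (φ ψ : Fml α) (x : SPT α Act S) :
      SDeriv γ actF effF sigF (.gc φ (.se ψ x)) (.se (φ.imp ψ) (.gc φ x))
  | CM1 (x y : SPT α Act S) :
      SDeriv γ actF effF sigF (.par x y) (.alt (.alt (.lm x y) (.lm y x)) (.cm x y))
  | CM2S (a : Option Act) (x : SPT α Act S) :
      SDeriv γ actF effF sigF (.lm (actd a) x) (.alt (.seq (actd a) x) (.encap Set.univ x))
  | CM3S (a : Option Act) (x y : SPT α Act S) :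
      SDeriv γ actF effF sigF (.lm (.seq (actd a) x) y)
        (.alt (.seq (actd a) (.par x y)) (.encap Set.univ y))
  | CM4 (x y z : SPT α Act S) : SDeriv γ actF effF sigF (.lm (.alt x y) z) (.alt (.lm x z) (.lm y z))
  | CM5 (a b : Option Act) (x : SPT α Act S) :
      SDeriv γ actF effF sigF (.cm (.seq (actd a) x) (actd b)) (.seq (actd (γ a b)) x)
  | CM6 (a b : Option Act) (x : SPT α Act S) :
      SDeriv γ actF effF sigF (.cm (actd a) (.seq (actd b) x)) (.seq (actd (γ a b)) x)
  | CM7 (a b : Option Act) (x y : SPT α Act S) :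
      SDeriv γ actF effF sigF (.cm (.seq (actd a) x) (.seq (actd b) y)) (.seq (actd (γ a b)) (.par x y))
  | CM8 (x y z : SPT α Act S) : SDeriv γ actF effF sigF (.cm (.alt x y) z) (.alt (.cm x z) (.cm y z))
  | CM9 (x y z : SPT α Act S) : SDeriv γ actF effF sigF (.cm x (.alt y z)) (.alt (.cm x y) (.cm x z))
  | CF (a b : Option Act) : SDeriv γ actF effF sigF (.cm (actd a) (actd b)) (actd (γ a b) : SPT α Act S)
  | C1 (a b : Option Act) :
      SDeriv γ actF effF sigF (.cm (actd a) (actd b)) (.cm (actd b) (actd a) : SPT α Act S)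
  | C2 (a b c : Option Act) :
      SDeriv γ actF effF sigF (.cm (.cm (actd a) (actd b)) (actd c))
        (.cm (actd a) (.cm (actd b) (actd c)) : SPT α Act S)
  | C3 (a : Option Act) : SDeriv γ actF effF sigF (.cm .delta (actd a)) (.delta : SPT α Act S)
  | D1 (H : Set Act) (a : Act) : a ∉ H → SDeriv γ actF effF sigF (.encap H (.act a)) (.act a)
  | D1d (H : Set Act) : SDeriv γ actF effF sigF (.encap H (.delta : SPT α Act S)) .delta
  | D2 (H : Set Act) (a : Act) : a ∈ H → SDeriv γ actF effF sigF (.encap H (.act a)) .delta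
  | D3 (H : Set Act) (x y : SPT α Act S) :
      SDeriv γ actF effF sigF (.encap H (.alt x y)) (.alt (.encap H x) (.encap H y))
  | D4 (H : Set Act) (x y : SPT α Act S) :
      SDeriv γ actF effF sigF (.encap H (.seq x y)) (.seq (.encap H x) (.encap H y))
  | GC8S (φ : Fml α) (x y : SPT α Act S) :
      SDeriv γ actF effF sigF (.lm (.gc φ x) y) (.alt (.gc φ (.lm x y)) (.encap Set.univ y))
  | GC9S (φ : Fml α) (x y : SPT α Act S) :
      SDeriv γ actF effF sigF (.cm (.gc φ x) y) (.alt (.gc φ (.cm x y)) (.encap Set.univ y))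
  | GC10S (φ : Fml α) (x y : SPT α Act S) :
      SDeriv γ actF effF sigF (.cm x (.gc φ y)) (.alt (.gc φ (.cm x y)) (.encap Set.univ x))
  | GC11 (H : Set Act) (φ : Fml α) (x : SPT α Act S) :
      SDeriv γ actF effF sigF (.encap H (.gc φ x)) (.gc φ (.encap H x))
  | SE9 (φ : Fml α) (x y : SPT α Act S) : SDeriv γ actF effF sigF (.lm (.se φ x) y) (.se φ (.lm x y))
  | SE10 (φ : Fml α) (x y : SPT α Act S) : SDeriv γ actF effF sigF (.cm (.se φ x) y) (.se φ (.cm x y))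
  | SE11 (φ : Fml α) (x y : SPT α Act S) : SDeriv γ actF effF sigF (.cm x (.se φ y)) (.se φ (.cm x y))
  | SE12 (H : Set Act) (φ : Fml α) (x : SPT α Act S) :
      SDeriv γ actF effF sigF (.encap H (.se φ x)) (.se φ (.encap H x))
  | SO1 (a : Option Act) (s : S) :
      SDeriv γ actF effF sigF (.st s (actd a)) (.se (sigF s) (actd (actF a s)))
  | SO2 (a : Option Act) (s : S) (x : SPT α Act S) :
      SDeriv γ actF effF sigF (.st s (.seq (actd a) x))
        (.se (sigF s) (.seq (actd (actF a s)) (.st (effF a s) x)))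
  | SO3 (s : S) (x y : SPT α Act S) :
      SDeriv γ actF effF sigF (.st s (.alt x y)) (.alt (.st s x) (.st s y))
  | SO4 (s : S) (φ : Fml α) (x : SPT α Act S) :
      SDeriv γ actF effF sigF (.st s (.gc φ x)) (.se (sigF s) (.gc φ (.st s x)))
  | SO5 (s : S) (φ : Fml α) (x : SPT α Act S) :
      SDeriv γ actF effF sigF (.st s (.se φ x)) (.se φ (.st s x))

/-- Basic terms (basic terms of ctBPAps, within the ctACPps syntax). -/
inductive SBasic : SPT α Act S → Prop
  | nex : SBasic (.nex : SPT α Act S)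
  | emiDelta {φ : Fml α} : ¬ EqBot φ → SBasic (.se φ .delta)
  | gcAct {φ : Fml α} (a : Act) : ¬ EqBot φ → SBasic (.gc φ (.act a))
  | gcSeq {φ : Fml α} (a : Act) {p : SPT α Act S} :
      ¬ EqBot φ → SBasic p → SBasic (.gc φ (.seq (.act a) p))
  | alt {p q : SPT α Act S} : SBasic p → SBasic q → SBasic (.alt p q)

/-- The signal (root signal) emitted by a process term. -/
def sigS (sigF : S → Fml α) : SPT α Act S → Fml α
  | .act _ => Fml.top
  | .delta => Fml.top
  | .nex => .bot
  | .alt p q => (sigS sigF p).conj (sigS sigF q)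
  | .seq p _ => sigS sigF p
  | .gc φ p => φ.imp (sigS sigF p)
  | .se φ p => φ.conj (sigS sigF p)
  | .par p q => (sigS sigF p).conj (sigS sigF q)
  | .lm p q => (sigS sigF p).conj (sigS sigF q)
  | .cm p q => (sigS sigF p).conj (sigS sigF q)
  | .encap _ p => sigS sigF p
  | .st s p => (sigS sigF p).conj (sigF s)

/-- The structural operational semantics of ctACPps: `STr γ actF effF sigF p φ a (some q)` is the
action step p –φ,a→ q and `STr γ actF effF sigF p φ a none` is the action termination p –φ,a→ √. -/
inductive STr (γ : Option Act → Option Act → Option Act)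
    (actF : Option Act → S → Option Act) (effF : Option Act → S → S)
    (sigF : S → Fml α) :
    SPT α Act S → Fml α → Act → Option (SPT α Act S) → Prop
  | act (a : Act) : STr γ actF effF sigF (.act a) Fml.top a none
  | altL {x φ a o} (y : SPT α Act S) :
      STr γ actF effF sigF x φ a o → ¬ EqBot (sigS sigF (SPT.alt x y)) → STr γ actF effF sigF (.alt x y) φ a o
  | altR {y φ a o} (x : SPT α Act S) :
      STr γ actF effF sigF y φ a o → ¬ EqBot (sigS sigF (SPT.alt x y)) → STr γ actF effF sigF (.alt x y) φ a o
  | seqT {x φ a} (y : SPT α Act S) :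
      STr γ actF effF sigF x φ a none → ¬ EqBot (sigS sigF y) → STr γ actF effF sigF (.seq x y) φ a (some y)
  | seqS {x φ a x'} (y : SPT α Act S) :
      STr γ actF effF sigF x φ a (some x') → STr γ actF effF sigF (.seq x y) φ a (some (.seq x' y))
  | gcR {x φ a o} (ψ : Fml α) :
      STr γ actF effF sigF x φ a o → ¬ EqBot (φ.conj ψ) → STr γ actF effF sigF (.gc ψ x) (φ.conj ψ) a o
  | seR {x φ a o} (ψ : Fml α) :
      STr γ actF effF sigF x φ a o → ¬ EqBot (sigS sigF (SPT.se ψ x)) → STr γ actF effF sigF (.se ψ x) φ a o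
  | parTL {x φ a} (y : SPT α Act S) :
      STr γ actF effF sigF x φ a none → ¬ EqBot (sigS sigF (SPT.par x y)) → ¬ EqBot (sigS sigF y) →
      STr γ actF effF sigF (.par x y) φ a (some y)
  | parTR (x : SPT α Act S) {y φ a} :
      STr γ actF effF sigF y φ a none → ¬ EqBot (sigS sigF (SPT.par x y)) → ¬ EqBot (sigS sigF x) →
      STr γ actF effF sigF (.par x y) φ a (some x)
  | parSL {x φ a x'} (y : SPT α Act S) :
      STr γ actF effF sigF x φ a (some x') → ¬ EqBot (sigS sigF (SPT.par x y)) →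
      ¬ EqBot (sigS sigF (SPT.par x' y)) → STr γ actF effF sigF (.par x y) φ a (some (.par x' y))
  | parSR (x : SPT α Act S) {y φ a y'} :
      STr γ actF effF sigF y φ a (some y') → ¬ EqBot (sigS sigF (SPT.par x y)) →
      ¬ EqBot (sigS sigF (SPT.par x y')) → STr γ actF effF sigF (.par x y) φ a (some (.par x y'))
  | parCTT {x y : SPT α Act S} {φ ψ a b c} :
      STr γ actF effF sigF x φ a none → STr γ actF effF sigF y ψ b none → γ (some a) (some b) = some c →
      ¬ EqBot (φ.conj ψ) → ¬ EqBot (sigS sigF (SPT.par x y)) →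
      STr γ actF effF sigF (.par x y) (φ.conj ψ) c none
  | parCTS {x y : SPT α Act S} {φ ψ a b c y'} :
      STr γ actF effF sigF x φ a none → STr γ actF effF sigF y ψ b (some y') → γ (some a) (some b) = some c →
      ¬ EqBot (φ.conj ψ) → ¬ EqBot (sigS sigF (SPT.par x y)) →
      STr γ actF effF sigF (.par x y) (φ.conj ψ) c (some y')
  | parCST {x y : SPT α Act S} {φ ψ a b c x'} :
      STr γ actF effF sigF x φ a (some x') → STr γ actF effF sigF y ψ b none → γ (some a) (some b) = some c →
      ¬ EqBot (φ.conj ψ) → ¬ EqBot (sigS sigF (SPT.par x y)) →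
      STr γ actF effF sigF (.par x y) (φ.conj ψ) c (some x')
  | parCSS {x y : SPT α Act S} {φ ψ a b c x' y'} :
      STr γ actF effF sigF x φ a (some x') → STr γ actF effF sigF y ψ b (some y') → γ (some a) (some b) = some c →
      ¬ EqBot (φ.conj ψ) → ¬ EqBot (sigS sigF (SPT.par x y)) →
      ¬ EqBot (sigS sigF (SPT.par x' y')) →
      STr γ actF effF sigF (.par x y) (φ.conj ψ) c (some (.par x' y'))
  | lmT {x φ a} (y : SPT α Act S) :
      STr γ actF effF sigF x φ a none → ¬ EqBot (sigS sigF (SPT.lm x y)) → ¬ EqBot (sigS sigF y) →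
      STr γ actF effF sigF (.lm x y) φ a (some y)
  | lmS {x φ a x'} (y : SPT α Act S) :
      STr γ actF effF sigF x φ a (some x') → ¬ EqBot (sigS sigF (SPT.lm x y)) →
      ¬ EqBot (sigS sigF (SPT.par x' y)) → STr γ actF effF sigF (.lm x y) φ a (some (.par x' y))
  | cmTT {x y : SPT α Act S} {φ ψ a b c} :
      STr γ actF effF sigF x φ a none → STr γ actF effF sigF y ψ b none → γ (some a) (some b) = some c →
      ¬ EqBot (φ.conj ψ) → ¬ EqBot (sigS sigF (SPT.cm x y)) →
      STr γ actF effF sigF (.cm x y) (φ.conj ψ) c none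
  | cmTS {x y : SPT α Act S} {φ ψ a b c y'} :
      STr γ actF effF sigF x φ a none → STr γ actF effF sigF y ψ b (some y') → γ (some a) (some b) = some c →
      ¬ EqBot (φ.conj ψ) → ¬ EqBot (sigS sigF (SPT.cm x y)) →
      STr γ actF effF sigF (.cm x y) (φ.conj ψ) c (some y')
  | cmST {x y : SPT α Act S} {φ ψ a b c x'} :
      STr γ actF effF sigF x φ a (some x') → STr γ actF effF sigF y ψ b none → γ (some a) (some b) = some c →
      ¬ EqBot (φ.conj ψ) → ¬ EqBot (sigS sigF (SPT.cm x y)) →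
      STr γ actF effF sigF (.cm x y) (φ.conj ψ) c (some x')
  | cmSS {x y : SPT α Act S} {φ ψ a b c x' y'} :
      STr γ actF effF sigF x φ a (some x') → STr γ actF effF sigF y ψ b (some y') → γ (some a) (some b) = some c →
      ¬ EqBot (φ.conj ψ) → ¬ EqBot (sigS sigF (SPT.cm x y)) →
      ¬ EqBot (sigS sigF (SPT.par x' y')) →
      STr γ actF effF sigF (.cm x y) (φ.conj ψ) c (some (.par x' y'))
  | encapR {x φ a o} (H : Set Act) :
      STr γ actF effF sigF x φ a o → a ∉ H →
      STr γ actF effF sigF (.encap H x) φ a (Option.map (SPT.encap H) o)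
  | stT {x φ a a'} (s : S) :
      STr γ actF effF sigF x φ a none → actF (some a) s = some a' →
      ¬ EqBot (sigS sigF (SPT.st s x)) →
      STr γ actF effF sigF (.st s x) φ a' none
  | stS {x φ a a' x'} (s : S) :
      STr γ actF effF sigF x φ a (some x') → actF (some a) s = some a' →
      ¬ EqBot (sigS sigF (SPT.st s x)) →
      ¬ EqBot (sigS sigF (SPT.st (effF (some a) s) x')) →
      STr γ actF effF sigF (.st s x) φ a' (some (.st (effF (some a) s) x'))

/-- Lift a relation on process terms to their optional (√-extended) targets. -/
def SOptR (R : SPT α Act S → SPT α Act S → Prop) :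
    Option (SPT α Act S) → Option (SPT α Act S) → Prop
  | none, none => True
  | some p, some q => R p q
  | _, _ => False

/-- The (one-directional) simulation conditions of a splitting bisimulation. -/
def SSim (γ : Option Act → Option Act → Option Act)
    (actF : Option Act → S → Option Act) (effF : Option Act → S → S)
    (sigF : S → Fml α)
    (R : SPT α Act S → SPT α Act S → Prop) (p q : SPT α Act S) : Prop :=
  (∀ φ a o, STr γ actF effF sigF p φ a o →
    ∀ σ : α → V3, eval σ (sigS sigF p) ≠ V3.f → eval σ φ ≠ V3.f →
      ∃ ψ o', eval σ ψ = eval σ φ ∧ STr γ actF effF sigF q ψ a o' ∧ SOptR R o o') ∧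
  FEquiv (sigS sigF p) (sigS sigF q)

/-- `R` is a bisimulation. -/
def SIsBisim (γ : Option Act → Option Act → Option Act)
    (actF : Option Act → S → Option Act) (effF : Option Act → S → S)
    (sigF : S → Fml α)
    (R : SPT α Act S → SPT α Act S → Prop) : Prop :=
  ∀ p q, R p q → SSim γ actF effF sigF R p q ∧
    SSim γ actF effF sigF (fun u v => R v u) q p

/-- Bisimulation equivalence. -/
def SBisim (γ : Option Act → Option Act → Option Act)
    (actF : Option Act → S → Option Act) (effF : Option Act → S → S)
    (sigF : S → Fml α) (p q : SPT α Act S) : Prop :=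
  ∃ R, SIsBisim γ actF effF sigF R ∧ R p q

end


/-! ### Auxiliary development: Hilbert-system toolbox and completeness -/

section HilbTools
variable {α : Type} {Γ : Set (Fml α)}

open Fml Hilb

theorem Hilb.mono {Γ Γ' : Set (Fml α)} (h : Γ ⊆ Γ') {A : Fml α} (hA : Hilb Γ A) :
    Hilb Γ' A := by
  induction hA with
  | hyp h' => exact .hyp (h h')
  | mp _ _ ih1 ih2 => exact .mp ih1 ih2
  | ax1 A B => exact .ax1 A B
  | ax2 A B C => exact .ax2 A B C
  | ax3 A B => exact .ax3 A B
  | ax4 A => exact .ax4 A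
  | ax5 A B => exact .ax5 A B
  | ax6 A B => exact .ax6 A B
  | ax7 A B => exact .ax7 A B
  | ax8 A B => exact .ax8 A B
  | ax9 A B => exact .ax9 A B
  | ax10 A B C => exact .ax10 A B C
  | ax11 A => exact .ax11 A
  | ax12 A B => exact .ax12 A B
  | ax13 A B => exact .ax13 A B
  | ax14 A B => exact .ax14 A B
  | ax15 A => exact .ax15 A

theorem Hilb.impId (A : Fml α) : Hilb Γ (A.imp A) :=
  .mp (.mp (.ax2 A (A.imp A) A) (.ax1 A (A.imp A))) (.ax1 A A)

/-- Deduction theorem. -/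
theorem Hilb.ded {A B : Fml α} (h : Hilb (insert A Γ) B) : Hilb Γ (A.imp B) := by
  induction h with
  | @hyp C hC =>
    rcases hC with h | h
    · subst h; exact Hilb.impId _
    · exact .mp (.ax1 _ _) (.hyp h)
  | @mp C D _ _ ih1 ih2 => exact .mp (.mp (.ax2 A C D) ih1) ih2
  | ax1 A B => exact .mp (.ax1 _ _) (.ax1 A B)
  | ax2 A B C => exact .mp (.ax1 _ _) (.ax2 A B C)
  | ax3 A B => exact .mp (.ax1 _ _) (.ax3 A B)
  | ax4 A => exact .mp (.ax1 _ _) (.ax4 A)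
  | ax5 A B => exact .mp (.ax1 _ _) (.ax5 A B)
  | ax6 A B => exact .mp (.ax1 _ _) (.ax6 A B)
  | ax7 A B => exact .mp (.ax1 _ _) (.ax7 A B)
  | ax8 A B => exact .mp (.ax1 _ _) (.ax8 A B)
  | ax9 A B => exact .mp (.ax1 _ _) (.ax9 A B)
  | ax10 A B C => exact .mp (.ax1 _ _) (.ax10 A B C)
  | ax11 A => exact .mp (.ax1 _ _) (.ax11 A)
  | ax12 A B => exact .mp (.ax1 _ _) (.ax12 A B)
  | ax13 A B => exact .mp (.ax1 _ _) (.ax13 A B)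
  | ax14 A B => exact .mp (.ax1 _ _) (.ax14 A B)
  | ax15 A => exact .mp (.ax1 _ _) (.ax15 A)

theorem Hilb.wk {A B : Fml α} (h : Hilb Γ B) : Hilb (insert A Γ) B :=
  h.mono (Set.subset_insert _ _)

theorem Hilb.comp {A B C : Fml α} (h1 : Hilb Γ (A.imp B)) (h2 : Hilb Γ (B.imp C)) :
    Hilb Γ (A.imp C) :=
  .mp (.mp (.ax2 A B C) (.mp (.ax1 _ _) h2)) h1

theorem Hilb.impI {A B : Fml α} (h : Hilb Γ B) : Hilb Γ (A.imp B) :=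
  .mp (.ax1 _ _) h

theorem Hilb.cI {A B : Fml α} (h1 : Hilb Γ A) (h2 : Hilb Γ B) : Hilb Γ (A.conj B) :=
  .mp (.mp (.ax7 A B) h1) h2

theorem Hilb.cE1 {A B : Fml α} (h : Hilb Γ (A.conj B)) : Hilb Γ A := .mp (.ax5 A B) h
theorem Hilb.cE2 {A B : Fml α} (h : Hilb Γ (A.conj B)) : Hilb Γ B := .mp (.ax6 A B) h
theorem Hilb.dI1 {A : Fml α} (B : Fml α) (h : Hilb Γ A) : Hilb Γ (A.disj B) :=
  .mp (.ax8 A B) h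
theorem Hilb.dI2 {B : Fml α} (A : Fml α) (h : Hilb Γ B) : Hilb Γ (A.disj B) :=
  .mp (.ax9 A B) h

theorem Hilb.dcases {A B C : Fml α} (h : Hilb Γ (A.disj B))
    (h1 : Hilb (insert A Γ) C) (h2 : Hilb (insert B Γ) C) : Hilb Γ C :=
  .mp (.mp (.mp (.ax10 A B C) h1.ded) h2.ded) h

theorem Hilb.iff1 {A B : Fml α} (h : Hilb Γ (Fml.iff' A B)) : Hilb Γ (A.imp B) := h.cE1
theorem Hilb.iff2 {A B : Fml α} (h : Hilb Γ (Fml.iff' A B)) : Hilb Γ (B.imp A) := h.cE2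

theorem Hilb.efq {A C : Fml α} (h : Hilb Γ (A.imp .bot)) : Hilb Γ (A.imp C) :=
  h.comp (.ax4 C)

theorem Hilb.notBot : Hilb Γ (Fml.neg (.bot : Fml α)) :=
  Hilb.dcases (.ax15 .bot) (.mp (.ax4 _) (.hyp (Set.mem_insert _ _)))
    (.hyp (Set.mem_insert _ _))

theorem Hilb.dnI {A : Fml α} (h : Hilb Γ A) : Hilb Γ A.neg.neg :=
  .mp ((Hilb.ax11 A).iff2) h

/-- The characteristic formula of a literal value. -/
def Dlit {α : Type} (x : α) : V3 → Fml α
  | .t => (Fml.var x).conj ((Fml.var x).neg.imp .bot)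
  | .b => (Fml.var x).conj (Fml.var x).neg
  | .f => (Fml.var x).neg.conj ((Fml.var x).imp .bot)

theorem Hilb.trich (x : α) :
    Hilb Γ ((Dlit x .t).disj ((Dlit x .b).disj (Dlit x .f))) := by
  set p : Fml α := Fml.var x with hp
  have h2 : Hilb Γ ((p.neg.imp .bot).disj p.neg) := by
    refine Hilb.dcases (Hilb.ax15 (p.neg.imp .bot)) (Hilb.dI1 _ (.hyp (Set.mem_insert _ _))) ?_
    exact Hilb.dI2 _ ((Hilb.mp ((Hilb.ax12 p.neg .bot).iff1) (.hyp (Set.mem_insert _ _))).cE1)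
  have h3 : Hilb Γ ((p.imp .bot).disj p) := by
    refine Hilb.dcases (Hilb.ax15 (p.imp .bot)) (Hilb.dI1 _ (.hyp (Set.mem_insert _ _))) ?_
    exact Hilb.dI2 _ ((Hilb.mp ((Hilb.ax12 p .bot).iff1) (.hyp (Set.mem_insert _ _))).cE1)
  refine Hilb.dcases (Hilb.ax15 p) ?_ ?_
  · refine Hilb.dcases h2.wk ?_ ?_
    · exact Hilb.dI1 _ (Hilb.cI (.hyp (Set.mem_insert_of_mem _ (Set.mem_insert _ _)))
        (.hyp (Set.mem_insert _ _)))
    · exact Hilb.dI2 _ (Hilb.dI1 _ (Hilb.cI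
        (.hyp (Set.mem_insert_of_mem _ (Set.mem_insert _ _))) (.hyp (Set.mem_insert _ _))))
  · refine Hilb.dcases h3.wk ?_ ?_
    · exact Hilb.dI2 _ (Hilb.dI2 _ (Hilb.cI
        (.hyp (Set.mem_insert_of_mem _ (Set.mem_insert _ _))) (.hyp (Set.mem_insert _ _))))
    · exact Hilb.dI2 _ (Hilb.dI1 _ (Hilb.cI (.hyp (Set.mem_insert _ _))
        (.hyp (Set.mem_insert_of_mem _ (Set.mem_insert _ _)))))

/-- Kalmár-style main lemma for LP→⊥. -/
theorem kalmar {α : Type} (σ : α → V3) (Γ : Set (Fml α))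
    (hΓ : ∀ x, Dlit x (σ x) ∈ Γ) (A : Fml α) :
    (eval σ A ≠ .f → Hilb Γ A) ∧ (eval σ A = .f → Hilb Γ (A.imp .bot)) ∧
    (eval σ A ≠ .t → Hilb Γ A.neg) ∧ (eval σ A = .t → Hilb Γ (A.neg.imp .bot)) := by
  induction A with
  | var x =>
    have h := Hilb.hyp (Γ := Γ) (hΓ x)
    rcases hv : σ x with _ | _ | _ <;> rw [hv] at h <;>
      simp only [Dlit] at h <;>
      refine ⟨?_, ?_, ?_, ?_⟩ <;> intro hx <;> simp [eval, hv] at hx ⊢ <;>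
      first
        | exact h.cE1
        | exact h.cE2
  | bot =>
    refine ⟨?_, ?_, ?_, ?_⟩ <;> intro hx <;> simp [eval] at hx ⊢
    · exact Hilb.impId _
    · exact Hilb.notBot
  | neg A ih =>
    obtain ⟨i1, i2, i3, i4⟩ := ih
    refine ⟨?_, ?_, ?_, ?_⟩ <;> intro hx <;> simp only [eval] at hx <;>
      rcases hv : eval σ A with _ | _ | _ <;> rw [hv] at hx <;> simp [negT] at hx ⊢
    · exact i3 (fun h => V3.noConfusion (hv.symm.trans h))
    · exact i3 (fun h => V3.noConfusion (hv.symm.trans h))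
    · exact i4 hv
    · exact Hilb.dnI (i1 (fun h => V3.noConfusion (hv.symm.trans h)))
    · exact Hilb.dnI (i1 (fun h => V3.noConfusion (hv.symm.trans h)))
    · exact ((Hilb.ax11 A).iff1).comp (i2 hv)
  | conj A B ihA ihB =>
    obtain ⟨a1, a2, a3, a4⟩ := ihA
    obtain ⟨b1, b2, b3, b4⟩ := ihB
    refine ⟨?_, ?_, ?_, ?_⟩ <;> intro hx <;>
      rcases hu : eval σ A with _ | _ | _ <;> rcases hv : eval σ B with _ | _ | _ <;>
      simp [eval, conjT, hu, hv] at hx ⊢ <;>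
      first
        | exact Hilb.cI (a1 (fun h => V3.noConfusion (hu.symm.trans h))) (b1 (fun h => V3.noConfusion (hv.symm.trans h)))
        | exact (Hilb.ax5 A B).comp (a2 hu)
        | exact (Hilb.ax6 A B).comp (b2 hv)
        | exact Hilb.mp ((Hilb.ax13 A B).iff2) (Hilb.dI1 _ (a3 (fun h => V3.noConfusion (hu.symm.trans h))))
        | exact Hilb.mp ((Hilb.ax13 A B).iff2) (Hilb.dI2 _ (b3 (fun h => V3.noConfusion (hv.symm.trans h))))
        | exact ((Hilb.ax13 A B).iff1).comp
            (.mp (.mp (.ax10 A.neg B.neg .bot) (a4 hu)) (b4 hv))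
  | disj A B ihA ihB =>
    obtain ⟨a1, a2, a3, a4⟩ := ihA
    obtain ⟨b1, b2, b3, b4⟩ := ihB
    refine ⟨?_, ?_, ?_, ?_⟩ <;> intro hx <;>
      rcases hu : eval σ A with _ | _ | _ <;> rcases hv : eval σ B with _ | _ | _ <;>
      simp [eval, disjT, hu, hv] at hx ⊢ <;>
      first
        | exact Hilb.dI1 _ (a1 (fun h => V3.noConfusion (hu.symm.trans h)))
        | exact Hilb.dI2 _ (b1 (fun h => V3.noConfusion (hv.symm.trans h)))
        | exact .mp (.mp (.ax10 A B .bot) (a2 hu)) (b2 hv)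
        | exact Hilb.mp ((Hilb.ax14 A B).iff2) (Hilb.cI (a3 (fun h => V3.noConfusion (hu.symm.trans h))) (b3 (fun h => V3.noConfusion (hv.symm.trans h))))
        | exact ((Hilb.ax14 A B).iff1).comp ((Hilb.ax5 A.neg B.neg).comp (a4 hu))
        | exact ((Hilb.ax14 A B).iff1).comp ((Hilb.ax6 A.neg B.neg).comp (b4 hv))
  | imp A B ihA ihB =>
    obtain ⟨a1, a2, a3, a4⟩ := ihA
    obtain ⟨b1, b2, b3, b4⟩ := ihB
    refine ⟨?_, ?_, ?_, ?_⟩ <;> intro hx <;>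
      rcases hu : eval σ A with _ | _ | _ <;> rcases hv : eval σ B with _ | _ | _ <;>
      simp [eval, impT, hu, hv] at hx ⊢ <;>
      first
        | exact Hilb.efq (a2 hu)
        | exact Hilb.impI (b1 (fun h => V3.noConfusion (hv.symm.trans h)))
        | exact Hilb.ded (Hilb.mp (b2 hv).wk
            (Hilb.mp (.hyp (Set.mem_insert _ _)) (a1 (fun h => V3.noConfusion (hu.symm.trans h))).wk))
        | exact Hilb.mp ((Hilb.ax12 A B).iff2) (Hilb.cI (a1 (fun h => V3.noConfusion (hu.symm.trans h))) (b3 (fun h => V3.noConfusion (hv.symm.trans h))))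
        | exact ((Hilb.ax12 A B).iff1).comp ((Hilb.ax5 A B.neg).comp (a2 hu))
        | exact ((Hilb.ax12 A B).iff1).comp ((Hilb.ax6 A B.neg).comp (b4 hv))

theorem elimvars {α : Type} (A : Fml α) (L : List α)
    (h : ∀ σ : α → V3, Hilb {B | ∃ x ∈ L, B = Dlit x (σ x)} A) :
    Hilb (∅ : Set (Fml α)) A := by
  classical
  induction L with
  | nil =>
    have := h (fun _ => .t)
    refine this.mono ?_
    rintro B ⟨x, hx, -⟩
    exact absurd hx List.not_mem_nil
  | cons x L ih =>
    refine ih ?_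
    intro σ
    have key : ∀ v : V3,
        Hilb (insert (Dlit x v) {B | ∃ y ∈ L, B = Dlit y (σ y)}) A := by
      intro v
      refine (h (Function.update σ x v)).mono ?_
      rintro B ⟨y, hy, rfl⟩
      by_cases hxy : y = x
      · subst hxy
        rw [Function.update_self]
        exact Set.mem_insert _ _
      · rw [Function.update_of_ne hxy]
        exact Set.mem_insert_of_mem _ ⟨y, by
          rcases List.mem_cons.mp hy with h' | h'
          · exact absurd h' hxy
          · exact ⟨h', rfl⟩⟩
    refine Hilb.dcases (Hilb.trich x) (key .t) ?_
    refine Hilb.dcases (Hilb.hyp (Set.mem_insert _ _)) ?_ ?_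
    · exact (key .b).mono (Set.insert_subset_insert (Set.subset_insert _ _))
    · exact (key .f).mono (Set.insert_subset_insert (Set.subset_insert _ _))

theorem hilbComplete {α : Type} [Fintype α] (A : Fml α)
    (h : ∀ σ : α → V3, eval σ A ≠ V3.f) : Hilb (∅ : Set (Fml α)) A := by
  refine elimvars A Finset.univ.toList ?_
  intro σ
  refine (kalmar σ _ (fun x => ?_) A).1 (h σ)
  simp only [Set.mem_setOf_eq]
  exact ⟨x, by simp, rfl⟩

end HilbTools


/-! ### Process algebra toolbox -/

theorem topNeBot {α : Type} : ¬ EqBot (Fml.top : Fml α) := by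
  intro h
  have := h (fun _ => .t)
  simp [eval, Fml.top, negT] at this

theorem eqBot_propEq {α : Type} [Fintype α] {φ : Fml α} (h : EqBot φ) :
    PropEq φ .bot := by
  refine PropEq.imp (hilbComplete _ ?_)
  intro σ
  have hσ := h σ
  simp [InternEq, Fml.iff', eval, hσ, negT, conjT, impT]

/-- Size of a process term. -/
def psize {α Act S : Type} : SPT α Act S → Nat
  | .act _ => 1
  | .delta => 1
  | .nex => 1
  | .alt p q => psize p + psize q + 1
  | .seq p q => psize p + psize q + 1
  | .gc _ p => psize p + 1
  | .se _ p => psize p + 1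
  | .par p q => psize p + psize q + 1
  | .lm p q => psize p + psize q + 1
  | .cm p q => psize p + psize q + 1
  | .encap _ p => psize p + 1
  | .st _ p => psize p + 1

section Elim

variable {α Act S : Type} [Fintype α]
variable {γ : Option Act → Option Act → Option Act} {actF : Option Act → S → Option Act}
  {effF : Option Act → S → S} {sigF : S → Fml α}

/-- `p` is derivably equal to a basic term. -/
def ToB (γ : Option Act → Option Act → Option Act) (actF : Option Act → S → Option Act)
    (effF : Option Act → S → S) (sigF : S → Fml α) (p : SPT α Act S) : Prop :=
  ∃ q, SBasic q ∧ SDeriv γ actF effF sigF p q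

local notation "TB" => ToB γ actF effF sigF
local infix:50 " ≋ " => SDeriv γ actF effF sigF

theorem tbCongr {p q : SPT α Act S} (h : p ≋ q) (hq : TB q) : TB p := by
  obtain ⟨r, hr, dr⟩ := hq
  exact ⟨r, hr, h.trans dr⟩

theorem tbAlt {p q : SPT α Act S} (hp : TB p) (hq : TB q) : TB (.alt p q) := by
  obtain ⟨r, hr, dr⟩ := hp
  obtain ⟨r', hr', dr'⟩ := hq
  exact ⟨.alt r r', .alt hr hr', .altC dr dr'⟩

theorem dAltDelta (p : SPT α Act S) : SPT.alt .delta p ≋ p :=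
  (SDeriv.A1 _ _).trans (SDeriv.A6 p)

theorem tbDelta : TB (.delta : SPT α Act S) :=
  ⟨.se .top .delta, .emiDelta topNeBot, (SDeriv.SE1 _).symm⟩

theorem tbNex : TB (.nex : SPT α Act S) := ⟨.nex, .nex, .refl _⟩

theorem tbSeDelta (φ : Fml α) : TB (SPT.se φ (.delta : SPT α Act S)) := by
  by_cases h : EqBot φ
  · exact ⟨.nex, .nex, (SDeriv.seC (eqBot_propEq h) (.refl _)).trans (SDeriv.SE2 _)⟩
  · exact ⟨.se φ .delta, .emiDelta h, .refl _⟩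

theorem tbGcAct (φ : Fml α) (a : Act) : TB (SPT.gc φ (.act a) : SPT α Act S) := by
  by_cases h : EqBot φ
  · exact tbCongr ((SDeriv.gcC (eqBot_propEq h) (.refl _)).trans (SDeriv.GC2 _)) tbDelta
  · exact ⟨.gc φ (.act a), .gcAct a h, .refl _⟩

theorem tbGcSeq (φ : Fml α) (a : Act) {p : SPT α Act S} (hp : SBasic p) :
    TB (SPT.gc φ (.seq (.act a) p)) := by
  by_cases h : EqBot φ
  · exact tbCongr ((SDeriv.gcC (eqBot_propEq h) (.refl _)).trans (SDeriv.GC2 _)) tbDelta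
  · exact ⟨_, .gcSeq a h hp, .refl _⟩

theorem tbSe (φ : Fml α) {p : SPT α Act S} (hp : SBasic p) : TB (SPT.se φ p) := by
  by_cases h : EqBot φ
  · exact ⟨.nex, .nex, (SDeriv.seC (eqBot_propEq h) (.refl _)).trans (SDeriv.SE2 _)⟩
  · refine ⟨.alt (.se φ .delta) p, .alt (.emiDelta h) hp, ?_⟩
    exact ((SDeriv.SE4 φ .delta p).trans (SDeriv.seC (.refl φ) (dAltDelta p))).symm

theorem tbGc (φ : Fml α) {p : SPT α Act S} (hp : SBasic p) : TB (SPT.gc φ p) := by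
  induction hp with
  | nex =>
    refine tbCongr ((SDeriv.gcC (.refl φ) (SDeriv.SE2 .delta).symm).trans
      ((SDeriv.SE8 φ .bot .delta).trans (SDeriv.seC (.refl _) (SDeriv.GC3 φ)))) ?_
    exact tbSeDelta _
  | @emiDelta ψ h =>
    exact tbCongr ((SDeriv.SE8 φ ψ .delta).trans (SDeriv.seC (.refl _) (SDeriv.GC3 φ)))
      (tbSeDelta _)
  | @gcAct ψ a h => exact tbCongr (SDeriv.GC6 φ ψ _) (tbGcAct _ a)
  | @gcSeq ψ a p h hp => exact tbCongr (SDeriv.GC6 φ ψ _) (tbGcSeq _ a hp)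
  | @alt p q hp hq ihp ihq => exact tbCongr (SDeriv.GC4 φ p q) (tbAlt ihp ihq)

theorem tbSe' (φ : Fml α) {p : SPT α Act S} (hp : TB p) : TB (SPT.se φ p) := by
  obtain ⟨r, hr, dr⟩ := hp
  exact tbCongr (SDeriv.seC (.refl φ) dr) (tbSe φ hr)

theorem tbGc' (φ : Fml α) {p : SPT α Act S} (hp : TB p) : TB (SPT.gc φ p) := by
  obtain ⟨r, hr, dr⟩ := hp
  exact tbCongr (SDeriv.gcC (.refl φ) dr) (tbGc φ hr)

theorem tbActd (c : Option Act) : TB (actd c : SPT α Act S) := by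
  cases c with
  | none => exact tbDelta
  | some a => exact ⟨.gc .top (.act a), .gcAct a topNeBot, (SDeriv.GC1 _).symm⟩

theorem tbSeqActd (c : Option Act) {p : SPT α Act S} (hp : SBasic p) :
    TB (SPT.seq (actd c) p) := by
  cases c with
  | none => exact tbCongr (SDeriv.A7 p) tbDelta
  | some a => exact ⟨.gc .top (.seq (.act a) p), .gcSeq a topNeBot hp, (SDeriv.GC1 _).symm⟩

theorem tbSeqActd' (c : Option Act) {p : SPT α Act S} (hp : TB p) :
    TB (SPT.seq (actd c) p) := by
  obtain ⟨r, hr, dr⟩ := hp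
  exact tbCongr (SDeriv.seqC (.refl _) dr) (tbSeqActd c hr)

theorem tbSeq {p q : SPT α Act S} (hp : SBasic p) (hq : SBasic q) :
    TB (SPT.seq p q) := by
  induction hp with
  | nex => exact ⟨.nex, .nex, SDeriv.NE2 q⟩
  | @emiDelta ψ h =>
    exact tbCongr ((SDeriv.SE5 ψ .delta q).trans (SDeriv.seC (.refl _) (SDeriv.A7 q)))
      (tbSeDelta _)
  | @gcAct ψ a h => exact tbCongr (SDeriv.GC5 ψ (.act a) q).symm (tbGcSeq ψ a hq)
  | @gcSeq ψ a p h hp ih =>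
    refine tbCongr ((SDeriv.GC5 ψ _ q).symm.trans (SDeriv.gcC (.refl ψ)
      (SDeriv.A5 (.act a) p q))) ?_
    obtain ⟨r, hr, dr⟩ := ih
    exact tbCongr (SDeriv.gcC (.refl ψ) (SDeriv.seqC (.refl _) dr)) (tbGcSeq ψ a hr)
  | @alt p1 p2 h1 h2 ih1 ih2 =>
    exact tbCongr (SDeriv.A4 p1 p2 q) (tbAlt ih1 ih2)

theorem tbSeq' {p q : SPT α Act S} (hp : TB p) (hq : TB q) : TB (SPT.seq p q) := by
  obtain ⟨r, hr, dr⟩ := hp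
  obtain ⟨r', hr', dr'⟩ := hq
  exact tbCongr (SDeriv.seqC dr dr') (tbSeq hr hr')

theorem tbEnc (H : Set Act) {p : SPT α Act S} (hp : SBasic p) :
    TB (SPT.encap H p) := by
  induction hp with
  | nex =>
    exact tbCongr ((SDeriv.encapC H (SDeriv.SE2 .delta).symm).trans
      ((SDeriv.SE12 H .bot .delta).trans (SDeriv.SE2 _))) tbNex
  | @emiDelta ψ h =>
    exact ⟨.se ψ .delta, .emiDelta h,
      (SDeriv.SE12 H ψ .delta).trans (SDeriv.seC (.refl ψ) (SDeriv.D1d H))⟩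
  | @gcAct ψ a h =>
    by_cases ha : a ∈ H
    · exact tbCongr ((SDeriv.GC11 H ψ _).trans ((SDeriv.gcC (.refl ψ)
        (SDeriv.D2 H a ha)).trans (SDeriv.GC3 ψ))) tbDelta
    · exact ⟨.gc ψ (.act a), .gcAct a h,
        (SDeriv.GC11 H ψ _).trans (SDeriv.gcC (.refl ψ) (SDeriv.D1 H a ha))⟩
  | @gcSeq ψ a p h hp ih =>
    obtain ⟨r, hr, dr⟩ := ih
    by_cases ha : a ∈ H
    · refine tbCongr ((SDeriv.GC11 H ψ _).trans ((SDeriv.gcC (.refl ψ)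
        ((SDeriv.D4 H _ p).trans ((SDeriv.seqC (SDeriv.D2 H a ha) dr).trans
          (SDeriv.A7 r)))).trans (SDeriv.GC3 ψ))) tbDelta
    · refine tbCongr ((SDeriv.GC11 H ψ _).trans (SDeriv.gcC (.refl ψ)
        ((SDeriv.D4 H _ p).trans (SDeriv.seqC (SDeriv.D1 H a ha) dr)))) ?_
      exact tbGcSeq ψ a hr
  | @alt p1 p2 h1 h2 ih1 ih2 =>
    exact tbCongr (SDeriv.D3 H p1 p2) (tbAlt ih1 ih2)

theorem tbEnc' (H : Set Act) {p : SPT α Act S} (hp : TB p) : TB (SPT.encap H p) := by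
  obtain ⟨r, hr, dr⟩ := hp
  exact tbCongr (SDeriv.encapC H dr) (tbEnc H hr)

/-- `mkc a p?` is `actd a` or `(actd a) · p`. -/
def mkc {α Act S : Type} (a : Option Act) : Option (SPT α Act S) → SPT α Act S
  | none => actd a
  | some p => .seq (actd a) p

theorem encUnivActd (a : Option Act) :
    SPT.encap Set.univ (actd a : SPT α Act S) ≋ .delta := by
  cases a with
  | none => exact SDeriv.D1d _
  | some a => exact SDeriv.D2 _ a (Set.mem_univ a)

theorem encUnivMkc (a : Option Act) (p? : Option (SPT α Act S)) :
    SPT.encap Set.univ (mkc a p?) ≋ .delta := by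
  cases p? with
  | none => exact encUnivActd a
  | some p =>
    exact (SDeriv.D4 _ _ p).trans ((SDeriv.seqC (encUnivActd a) (.refl _)).trans
      (SDeriv.A7 _))

theorem cmCore {N : Nat}
    (hpar : ∀ u v : SPT α Act S, SBasic u → SBasic v → psize u + psize v < N →
      TB (.par u v))
    (a b : Option Act) (p? q? : Option (SPT α Act S))
    (hp : ∀ p ∈ p?, SBasic p) (hq : ∀ q ∈ q?, SBasic q)
    (hsz : ∀ p ∈ p?, ∀ q ∈ q?, psize p + psize q < N) :
    TB (.cm (mkc a p?) (mkc b q?)) := by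
  cases p? with
  | none =>
    cases q? with
    | none => exact tbCongr (SDeriv.CF a b) (tbActd _)
    | some q =>
      exact tbCongr (SDeriv.CM6 a b q) (tbSeqActd _ (hq q (Option.mem_def.mpr rfl)))
  | some p =>
    cases q? with
    | none =>
      exact tbCongr (SDeriv.CM5 a b p) (tbSeqActd _ (hp p (Option.mem_def.mpr rfl)))
    | some q =>
      refine tbCongr (SDeriv.CM7 a b p q) (tbSeqActd' _ ?_)
      exact hpar p q (hp p (Option.mem_def.mpr rfl)) (hq q (Option.mem_def.mpr rfl))
        (hsz p (Option.mem_def.mpr rfl) q (Option.mem_def.mpr rfl))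

theorem cmRight {N : Nat}
    (hpar : ∀ u v : SPT α Act S, SBasic u → SBasic v → psize u + psize v < N →
      TB (.par u v))
    (a : Option Act) (p? : Option (SPT α Act S))
    (hp : ∀ p ∈ p?, SBasic p) {q : SPT α Act S} (hq : SBasic q) :
    (∀ p ∈ p?, psize p + psize q < N) → TB (.cm (mkc a p?) q) := by
  induction hq with
  | nex =>
    intro _
    exact tbCongr ((SDeriv.cmC (.refl _) (SDeriv.SE2 .delta).symm).trans
      ((SDeriv.SE11 .bot _ .delta).trans (SDeriv.SE2 _))) tbNex
  | @emiDelta ψ h =>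
    intro _
    refine tbCongr (SDeriv.SE11 ψ _ .delta) (tbSe' ψ ?_)
    exact cmCore hpar a none p? none hp (by simp) (by simp)
  | @gcAct ψ b h =>
    intro hsz
    refine tbCongr (SDeriv.GC10S ψ _ _) (tbAlt (tbGc' ψ ?_)
      (tbCongr (encUnivMkc a p?) tbDelta))
    exact cmCore hpar a (some b) p? none hp (by simp) (by simp)
  | @gcSeq ψ b p' h hp' ih =>
    intro hsz
    refine tbCongr (SDeriv.GC10S ψ _ _) (tbAlt (tbGc' ψ ?_)
      (tbCongr (encUnivMkc a p?) tbDelta))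
    refine cmCore hpar a (some b) p? (some p') hp (by simpa using hp') ?_
    intro p hmem p'' hmem'
    have h1 := hsz p hmem
    simp only [Option.mem_def, Option.some.injEq] at hmem'
    subst hmem'
    simp [psize] at h1 ⊢
    omega
  | @alt q1 q2 h1 h2 ih1 ih2 =>
    intro hsz
    refine tbCongr (SDeriv.CM9 _ q1 q2) (tbAlt (ih1 ?_) (ih2 ?_)) <;>
      intro p hmem <;> have := hsz p hmem <;> simp [psize] at this ⊢ <;> omega

theorem cmAll {N : Nat}
    (hpar : ∀ u v : SPT α Act S, SBasic u → SBasic v → psize u + psize v < N →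
      TB (.par u v))
    {p q : SPT α Act S} (hp : SBasic p) (hq : SBasic q) :
    psize p + psize q ≤ N → TB (.cm p q) := by
  induction hp with
  | nex =>
    intro _
    exact tbCongr ((SDeriv.cmC (SDeriv.SE2 .delta).symm (.refl q)).trans
      ((SDeriv.SE10 .bot .delta q).trans (SDeriv.SE2 _))) tbNex
  | @emiDelta ψ h =>
    intro _
    refine tbCongr (SDeriv.SE10 ψ .delta q) (tbSe' ψ ?_)
    exact cmRight hpar none none (by simp) hq (by simp)
  | @gcAct ψ a h =>
    intro _
    refine tbCongr (SDeriv.GC9S ψ _ q) (tbAlt (tbGc' ψ ?_) (tbEnc _ hq))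
    exact cmRight hpar (some a) none (by simp) hq (by simp)
  | @gcSeq ψ a p' h hp' ih =>
    intro hsz
    refine tbCongr (SDeriv.GC9S ψ _ q) (tbAlt (tbGc' ψ ?_) (tbEnc _ hq))
    refine cmRight hpar (some a) (some p') (by simpa using hp') hq ?_
    intro u hmem
    simp only [Option.mem_def, Option.some.injEq] at hmem
    subst hmem
    simp [psize] at hsz ⊢
    omega
  | @alt p1 p2 h1 h2 ih1 ih2 =>
    intro hsz
    refine tbCongr (SDeriv.CM8 p1 p2 q) (tbAlt (ih1 ?_) (ih2 ?_)) <;>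
      simp [psize] at hsz ⊢ <;> omega

theorem lmAll {N : Nat}
    (hpar : ∀ u v : SPT α Act S, SBasic u → SBasic v → psize u + psize v < N →
      TB (.par u v))
    {p q : SPT α Act S} (hp : SBasic p) (hq : SBasic q) :
    psize p + psize q ≤ N → TB (.lm p q) := by
  induction hp with
  | nex =>
    intro _
    exact tbCongr ((SDeriv.lmC (SDeriv.SE2 .delta).symm (.refl q)).trans
      ((SDeriv.SE9 .bot .delta q).trans (SDeriv.SE2 _))) tbNex
  | @emiDelta ψ h =>
    intro _
    refine tbCongr (SDeriv.SE9 ψ .delta q) (tbSe' ψ ?_)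
    exact tbCongr ((SDeriv.CM2S none q).trans ((SDeriv.altC (SDeriv.A7 q)
      (.refl _)).trans (dAltDelta _))) (tbEnc _ hq)
  | @gcAct ψ a h =>
    intro _
    refine tbCongr (SDeriv.GC8S ψ _ q) (tbAlt (tbGc' ψ ?_) (tbEnc _ hq))
    exact tbCongr (SDeriv.CM2S (some a) q) (tbAlt (tbSeqActd (some a) hq) (tbEnc _ hq))
  | @gcSeq ψ a p' h hp' ih =>
    intro hsz
    refine tbCongr (SDeriv.GC8S ψ _ q) (tbAlt (tbGc' ψ ?_) (tbEnc _ hq))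
    refine tbCongr (SDeriv.CM3S (some a) p' q) (tbAlt (tbSeqActd' (some a) ?_)
      (tbEnc _ hq))
    refine hpar p' q hp' hq ?_
    simp [psize] at hsz ⊢
    omega
  | @alt p1 p2 h1 h2 ih1 ih2 =>
    intro hsz
    refine tbCongr (SDeriv.CM4 p1 p2 q) (tbAlt (ih1 ?_) (ih2 ?_)) <;>
      simp [psize] at hsz ⊢ <;> omega

theorem parLmCm : ∀ n : Nat, ∀ p q : SPT α Act S, SBasic p → SBasic q →
    psize p + psize q ≤ n → TB (.lm p q) ∧ TB (.cm p q) ∧ TB (.par p q) := by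
  intro n
  induction n using Nat.strong_induction_on with
  | _ n ih =>
    intro p q hp hq hn
    have hpar : ∀ u v : SPT α Act S, SBasic u → SBasic v →
        psize u + psize v < n → TB (.par u v) := by
      intro u v hu hv h
      exact (ih _ h u v hu hv le_rfl).2.2
    refine ⟨lmAll hpar hp hq hn, cmAll hpar hp hq hn, ?_⟩
    exact tbCongr (SDeriv.CM1 p q) (tbAlt (tbAlt (lmAll hpar hp hq hn)
      (lmAll hpar hq hp (by omega))) (cmAll hpar hp hq hn))

theorem tbPar' {p q : SPT α Act S} (hp : TB p) (hq : TB q) : TB (SPT.par p q) := by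
  obtain ⟨r, hr, dr⟩ := hp
  obtain ⟨r', hr', dr'⟩ := hq
  exact tbCongr (SDeriv.parC dr dr') (parLmCm _ r r' hr hr' le_rfl).2.2

theorem tbLm' {p q : SPT α Act S} (hp : TB p) (hq : TB q) : TB (SPT.lm p q) := by
  obtain ⟨r, hr, dr⟩ := hp
  obtain ⟨r', hr', dr'⟩ := hq
  exact tbCongr (SDeriv.lmC dr dr') (parLmCm _ r r' hr hr' le_rfl).1

theorem tbCm' {p q : SPT α Act S} (hp : TB p) (hq : TB q) : TB (SPT.cm p q) := by
  obtain ⟨r, hr, dr⟩ := hp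
  obtain ⟨r', hr', dr'⟩ := hq
  exact tbCongr (SDeriv.cmC dr dr') (parLmCm _ r r' hr hr' le_rfl).2.1

theorem tbSt {p : SPT α Act S} (hp : SBasic p) : ∀ s : S, TB (SPT.st s p) := by
  induction hp with
  | nex =>
    intro s
    exact tbCongr ((SDeriv.stC s (SDeriv.SE2 .delta).symm).trans
      ((SDeriv.SO5 s .bot .delta).trans (SDeriv.SE2 _))) tbNex
  | @emiDelta ψ h =>
    intro s
    refine tbCongr (SDeriv.SO5 s ψ .delta) (tbSe' ψ ?_)
    exact tbCongr (SDeriv.SO1 none s) (tbSe' _ (tbActd _))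
  | @gcAct ψ a h =>
    intro s
    refine tbCongr (SDeriv.SO4 s ψ _) (tbSe' _ (tbGc' ψ ?_))
    exact tbCongr (SDeriv.SO1 (some a) s) (tbSe' _ (tbActd _))
  | @gcSeq ψ a p' h hp' ih =>
    intro s
    refine tbCongr (SDeriv.SO4 s ψ _) (tbSe' _ (tbGc' ψ ?_))
    exact tbCongr (SDeriv.SO2 (some a) s p') (tbSe' _ (tbSeqActd' _ (ih _)))
  | @alt p1 p2 h1 h2 ih1 ih2 =>
    intro s
    exact tbCongr (SDeriv.SO3 s p1 p2) (tbAlt (ih1 s) (ih2 s))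

theorem tbSt' (s : S) {p : SPT α Act S} (hp : TB p) : TB (SPT.st s p) := by
  obtain ⟨r, hr, dr⟩ := hp
  exact tbCongr (SDeriv.stC s dr) (tbSt hr s)

theorem tbAll (p : SPT α Act S) : TB p := by
  induction p with
  | act a => exact tbActd (some a)
  | delta => exact tbDelta
  | nex => exact tbNex
  | alt p q ihp ihq => exact tbAlt ihp ihq
  | seq p q ihp ihq => exact tbSeq' ihp ihq
  | gc φ p ihp => exact tbGc' φ ihp
  | se φ p ihp => exact tbSe' φ ihp
  | par p q ihp ihq => exact tbPar' ihp ihq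
  | lm p q ihp ihq => exact tbLm' ihp ihq
  | cm p q ihp ihq => exact tbCm' ihp ihq
  | encap H p ihp => exact tbEnc' H ihp
  | st s p ihp => exact tbSt' s ihp

end Elim

/-- Elimination for ctACPps+SO: every closed term is derivably equal to a basic term. -/
theorem ctACPpsSO_elimination {α Act S : Type} [Fintype α] [Fintype Act]
    (γ : Option Act → Option Act → Option Act)
    (hγcomm : ∀ a b, γ a b = γ b a)
    (hγassoc : ∀ a b c, γ (γ a b) c = γ a (γ b c))
    (hγdelta : ∀ a, γ none a = none)
    (actF : Option Act → S → Option Act) (effF : Option Act → S → S)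
    (sigF : S → Fml α)
    (hactdelta : ∀ s, actF none s = none)
    (p : SPT α Act S) :
    ∃ q : SPT α Act S, SBasic q ∧ SDeriv γ actF effF sigF p q :=
  tbAll p
end

section
/- Bisimulation equivalence is a congruence with respect to the operators of ctACPps+SO: for all closed ctACPps+SO process terms p,q,p′,q′, every proposition φ, every H⊆A, and every state s∈S, if p ↔ q and p′ ↔ q′ then p+p′ ↔ q+q′, p·p′ ↔ q·q′, φ:→p ↔ φ:→q, φ⌃p ↔ φ⌃q, p∥p′ ↔ q∥q′, p⌊⌊p′ ↔ q⌊⌊q′, p|p′ ↔ q|q′, ∂_H(p) ↔ ∂_H(q), and λ_s(p) ↔ λ_s(q). -/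
set_option autoImplicit true
set_option maxHeartbeats 1000000

section Aux
variable {α Act S : Type}

lemma v_conj_ne {x y : V3} (h : conjT x y ≠ V3.f) : x ≠ V3.f ∧ y ≠ V3.f := by
  cases x <;> cases y <;> simp_all [conjT]

lemma v_conj_ne' {x y : V3} (hx : x ≠ V3.f) (hy : y ≠ V3.f) : conjT x y ≠ V3.f := by
  cases x <;> cases y <;> simp_all [conjT]

lemma v_imp_eq {x y : V3} (hx : x ≠ V3.f) : impT x y = y := by
  cases x <;> simp_all [impT]

lemma notEqBot_of {σ : α → V3} {A : Fml α} (h : eval σ A ≠ V3.f) : ¬ EqBot A :=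
  fun hb => h (hb σ)

lemma fequiv_notbot {A B : Fml α} (h : FEquiv A B) (hA : ¬ EqBot A) : ¬ EqBot B :=
  fun hb => hA fun σ => (h σ).trans (hb σ)

lemma fequiv_refl (A : Fml α) : FEquiv A A := fun _ => rfl

lemma fequiv_conj {A B A' B' : Fml α} (h : FEquiv A B) (h' : FEquiv A' B') :
    FEquiv (A.conj A') (B.conj B') := fun σ => by simp [eval, h σ, h' σ]

lemma fequiv_imp {A B A' B' : Fml α} (h : FEquiv A B) (h' : FEquiv A' B') :
    FEquiv (A.imp A') (B.imp B') := fun σ => by simp [eval, h σ, h' σ]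

/-- Congruence closure of two relations under the ctACPps+SO operators. -/
inductive Cong (R R' : SPT α Act S → SPT α Act S → Prop) : SPT α Act S → SPT α Act S → Prop
  | base1 {u v} : R u v → Cong R R' u v
  | base2 {u v} : R' u v → Cong R R' u v
  | alt {u v u' v'} : Cong R R' u v → Cong R R' u' v' → Cong R R' (.alt u u') (.alt v v')
  | seq {u v u' v'} : Cong R R' u v → Cong R R' u' v' → Cong R R' (.seq u u') (.seq v v')
  | gc (φ : Fml α) {u v} : Cong R R' u v → Cong R R' (.gc φ u) (.gc φ v)
  | se (φ : Fml α) {u v} : Cong R R' u v → Cong R R' (.se φ u) (.se φ v)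
  | par {u v u' v'} : Cong R R' u v → Cong R R' u' v' → Cong R R' (.par u u') (.par v v')
  | lm {u v u' v'} : Cong R R' u v → Cong R R' u' v' → Cong R R' (.lm u u') (.lm v v')
  | cm {u v u' v'} : Cong R R' u v → Cong R R' u' v' → Cong R R' (.cm u u') (.cm v v')
  | encap (H : Set Act) {u v} : Cong R R' u v → Cong R R' (.encap H u) (.encap H v)
  | st (s : S) {u v} : Cong R R' u v → Cong R R' (.st s u) (.st s v)

lemma cong_flip {R R' : SPT α Act S → SPT α Act S → Prop} {u v}
    (h : Cong R R' u v) : Cong (fun a b => R b a) (fun a b => R' b a) v u := by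
  induction h with
  | base1 h => exact .base1 h
  | base2 h => exact .base2 h
  | alt _ _ ih ih' => exact .alt ih ih'
  | seq _ _ ih ih' => exact .seq ih ih'
  | gc φ _ ih => exact .gc φ ih
  | se φ _ ih => exact .se φ ih
  | par _ _ ih ih' => exact .par ih ih'
  | lm _ _ ih ih' => exact .lm ih ih'
  | cm _ _ ih ih' => exact .cm ih ih'
  | encap H _ ih => exact .encap H ih
  | st s _ ih => exact .st s ih

lemma soptr_mono {R₁ R₂ : SPT α Act S → SPT α Act S → Prop}
    (h : ∀ a b, R₁ a b → R₂ a b) {o o'} (ho : SOptR R₁ o o') : SOptR R₂ o o' := by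
  cases o with
  | none => cases o' with
    | none => trivial
    | some _ => exact ho.elim
  | some x => cases o' with
    | none => exact ho.elim
    | some y => exact h _ _ ho

variable (γ : Option Act → Option Act → Option Act)
    (actF : Option Act → S → Option Act) (effF : Option Act → S → S)
    (sigF : S → Fml α)

lemma isbisim_flip {R : SPT α Act S → SPT α Act S → Prop}
    (hR : SIsBisim γ actF effF sigF R) :
    SIsBisim γ actF effF sigF (fun a b => R b a) := fun p q h =>
  ⟨(hR q p h).2, (hR q p h).1⟩

lemma cong_sig {R R' : SPT α Act S → SPT α Act S → Prop}
    (hR : SIsBisim γ actF effF sigF R) (hR' : SIsBisim γ actF effF sigF R')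
    {u v} (h : Cong R R' u v) : FEquiv (sigS sigF u) (sigS sigF v) := by
  induction h with
  | base1 h => exact (hR _ _ h).1.2
  | base2 h => exact (hR' _ _ h).1.2
  | alt _ _ ih ih' => exact fequiv_conj ih ih'
  | seq _ _ ih _ => exact ih
  | gc φ _ ih => exact fequiv_imp (fequiv_refl φ) ih
  | se φ _ ih => exact fequiv_conj (fequiv_refl φ) ih
  | par _ _ ih ih' => exact fequiv_conj ih ih'
  | lm _ _ ih ih' => exact fequiv_conj ih ih'
  | cm _ _ ih ih' => exact fequiv_conj ih ih'
  | encap H _ ih => exact ih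
  | st s _ ih => exact fequiv_conj ih (fequiv_refl (sigF s))

lemma cong_fwd {R R' : SPT α Act S → SPT α Act S → Prop}
    (hR : SIsBisim γ actF effF sigF R) (hR' : SIsBisim γ actF effF sigF R')
    {u v} (h : Cong R R' u v) :
    ∀ φ a o, STr γ actF effF sigF u φ a o →
      ∀ σ : α → V3, eval σ (sigS sigF u) ≠ V3.f → eval σ φ ≠ V3.f →
        ∃ ψ o', eval σ ψ = eval σ φ ∧ STr γ actF effF sigF v ψ a o' ∧
          SOptR (Cong R R') o o' := by
  induction h with
  | @base1 u v h =>
    intro φ a o htr σ hs hφ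
    obtain ⟨ψ, o', hev, htr', hopt⟩ := (hR u v h).1.1 φ a o htr σ hs hφ
    exact ⟨ψ, o', hev, htr', soptr_mono (fun _ _ => Cong.base1) hopt⟩
  | @base2 u v h =>
    intro φ a o htr σ hs hφ
    obtain ⟨ψ, o', hev, htr', hopt⟩ := (hR' u v h).1.1 φ a o htr σ hs hφ
    exact ⟨ψ, o', hev, htr', soptr_mono (fun _ _ => Cong.base2) hopt⟩
  | @alt u v u' v' hu hu' ihu ihu' =>
    intro φ a o htr σ hs hφ
    have hsv : ¬ EqBot (sigS sigF (SPT.alt v v')) :=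
      fun hb => notEqBot_of hs fun σ =>
        ((fequiv_conj (cong_sig γ actF effF sigF hR hR' hu)
          (cong_sig γ actF effF sigF hR hR' hu')) σ).trans (hb σ)
    have hs2 := v_conj_ne (x := eval σ (sigS sigF u)) (y := eval σ (sigS sigF u')) hs
    cases htr with
    | altL _ htr hside =>
      obtain ⟨ψ, o', hev, htr', hopt⟩ := ihu φ a o htr σ hs2.1 hφ
      exact ⟨ψ, o', hev, .altL v' htr' hsv, hopt⟩
    | altR _ htr hside =>
      obtain ⟨ψ, o', hev, htr', hopt⟩ := ihu' φ a o htr σ hs2.2 hφ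
      exact ⟨ψ, o', hev, .altR v htr' hsv, hopt⟩
  | @seq u v u' v' hu hu' ihu ihu' =>
    intro φ a o htr σ hs hφ
    cases htr with
    | seqT _ htr hside =>
      obtain ⟨ψ, o', hev, htr', hopt⟩ := ihu φ a none htr σ hs hφ
      cases o' with
      | some z => exact hopt.elim
      | none =>
        exact ⟨ψ, some v', hev,
          .seqT v' htr' (fequiv_notbot (cong_sig γ actF effF sigF hR hR' hu') hside), hu'⟩
    | seqS _ htr =>
      obtain ⟨ψ, o', hev, htr', hopt⟩ := ihu φ a _ htr σ hs hφ
      cases o' with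
      | none => exact hopt.elim
      | some y' =>
        exact ⟨ψ, some (.seq y' v'), hev, .seqS v' htr', Cong.seq hopt hu'⟩
  | @gc φ0 u v hu ihu =>
    intro φ a o htr σ hs hφ
    cases htr with
    | gcR _ htr hside =>
      rename_i φ1
      have h2 := v_conj_ne (x := eval σ φ1) (y := eval σ φ0) hφ
      have hsu : eval σ (sigS sigF u) ≠ V3.f := by
        have := hs
        simp only [sigS, eval] at this
        rwa [v_imp_eq h2.2] at this
      obtain ⟨ψ, o', hev, htr', hopt⟩ := ihu φ1 a o htr σ hsu h2.1
      refine ⟨ψ.conj φ0, o', by simp [eval, hev], .gcR φ0 htr' ?_, hopt⟩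
      exact notEqBot_of (σ := σ) (v_conj_ne' (hev ▸ h2.1) h2.2)
  | @se φ0 u v hu ihu =>
    intro φ a o htr σ hs hφ
    cases htr with
    | seR _ htr hside =>
      have h2 := v_conj_ne (x := eval σ φ0) (y := eval σ (sigS sigF u)) hs
      obtain ⟨ψ, o', hev, htr', hopt⟩ := ihu φ a o htr σ h2.2 hφ
      refine ⟨ψ, o', hev, .seR φ0 htr' ?_, hopt⟩
      exact fequiv_notbot
        (fequiv_conj (fequiv_refl φ0) (cong_sig γ actF effF sigF hR hR' hu)) hside
  | @par u v u' v' hu hu' ihu ihu' =>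
    intro φ a o htr σ hs hφ
    have hequ := cong_sig γ actF effF sigF hR hR' hu
    have hequ' := cong_sig γ actF effF sigF hR hR' hu'
    have hsv : ¬ EqBot (sigS sigF (SPT.par v v')) :=
      fequiv_notbot (fequiv_conj hequ hequ') (notEqBot_of hs)
    have hs2 := v_conj_ne (x := eval σ (sigS sigF u)) (y := eval σ (sigS sigF u')) hs
    cases htr with
    | parTL _ htr h1 h2 =>
      obtain ⟨ψ, o', hev, htr', hopt⟩ := ihu φ a none htr σ hs2.1 hφ
      cases o' with
      | some z => exact hopt.elim
      | none =>
        exact ⟨ψ, some v', hev, .parTL v' htr' hsv (fequiv_notbot hequ' h2), hu'⟩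
    | parTR _ htr h1 h2 =>
      obtain ⟨ψ, o', hev, htr', hopt⟩ := ihu' φ a none htr σ hs2.2 hφ
      cases o' with
      | some z => exact hopt.elim
      | none =>
        exact ⟨ψ, some v, hev, .parTR v htr' hsv (fequiv_notbot hequ h2), hu⟩
    | parSL _ htr h1 h2 =>
      obtain ⟨ψ, o', hev, htr', hopt⟩ := ihu φ a _ htr σ hs2.1 hφ
      cases o' with
      | none => exact hopt.elim
      | some y' =>
        refine ⟨ψ, some (.par y' v'), hev, .parSL v' htr' hsv ?_, Cong.par hopt hu'⟩
        exact fequiv_notbot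
          (fequiv_conj (cong_sig γ actF effF sigF hR hR' hopt) hequ') h2
    | parSR _ htr h1 h2 =>
      obtain ⟨ψ, o', hev, htr', hopt⟩ := ihu' φ a _ htr σ hs2.2 hφ
      cases o' with
      | none => exact hopt.elim
      | some y' =>
        refine ⟨ψ, some (.par v y'), hev, .parSR v htr' hsv ?_, Cong.par hu hopt⟩
        exact fequiv_notbot
          (fequiv_conj hequ (cong_sig γ actF effF sigF hR hR' hopt)) h2
    | parCTT htr1 htr2 hγ hlab h1 =>
      rename_i φ1 ψ1 a1 b1
      have hl := v_conj_ne (x := eval σ φ1) (y := eval σ ψ1) hφ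
      obtain ⟨ψa, o1, hev1, htr1', hopt1⟩ := ihu φ1 a1 none htr1 σ hs2.1 hl.1
      obtain ⟨ψb, o2, hev2, htr2', hopt2⟩ := ihu' ψ1 b1 none htr2 σ hs2.2 hl.2
      cases o1 with
      | some z => exact hopt1.elim
      | none =>
        cases o2 with
        | some z => exact hopt2.elim
        | none =>
          refine ⟨ψa.conj ψb, none, by simp [eval, hev1, hev2],
            .parCTT htr1' htr2' hγ ?_ hsv, trivial⟩
          exact notEqBot_of (σ := σ) (v_conj_ne' (hev1 ▸ hl.1) (hev2 ▸ hl.2))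
    | parCTS htr1 htr2 hγ hlab h1 =>
      rename_i φ1 ψ1 a1 b1 y'
      have hl := v_conj_ne (x := eval σ φ1) (y := eval σ ψ1) hφ
      obtain ⟨ψa, o1, hev1, htr1', hopt1⟩ := ihu φ1 a1 none htr1 σ hs2.1 hl.1
      obtain ⟨ψb, o2, hev2, htr2', hopt2⟩ := ihu' ψ1 b1 _ htr2 σ hs2.2 hl.2
      cases o1 with
      | some z => exact hopt1.elim
      | none =>
        cases o2 with
        | none => exact hopt2.elim
        | some y'' =>
          refine ⟨ψa.conj ψb, some y'', by simp [eval, hev1, hev2],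
            .parCTS htr1' htr2' hγ ?_ hsv, hopt2⟩
          exact notEqBot_of (σ := σ) (v_conj_ne' (hev1 ▸ hl.1) (hev2 ▸ hl.2))
    | parCST htr1 htr2 hγ hlab h1 =>
      rename_i φ1 ψ1 a1 b1 x'
      have hl := v_conj_ne (x := eval σ φ1) (y := eval σ ψ1) hφ
      obtain ⟨ψa, o1, hev1, htr1', hopt1⟩ := ihu φ1 a1 _ htr1 σ hs2.1 hl.1
      obtain ⟨ψb, o2, hev2, htr2', hopt2⟩ := ihu' ψ1 b1 none htr2 σ hs2.2 hl.2
      cases o2 with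
      | some z => exact hopt2.elim
      | none =>
        cases o1 with
        | none => exact hopt1.elim
        | some x'' =>
          refine ⟨ψa.conj ψb, some x'', by simp [eval, hev1, hev2],
            .parCST htr1' htr2' hγ ?_ hsv, hopt1⟩
          exact notEqBot_of (σ := σ) (v_conj_ne' (hev1 ▸ hl.1) (hev2 ▸ hl.2))
    | parCSS htr1 htr2 hγ hlab h1 h2 =>
      rename_i φ1 ψ1 a1 b1 x' y'
      have hl := v_conj_ne (x := eval σ φ1) (y := eval σ ψ1) hφ
      obtain ⟨ψa, o1, hev1, htr1', hopt1⟩ := ihu φ1 a1 _ htr1 σ hs2.1 hl.1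
      obtain ⟨ψb, o2, hev2, htr2', hopt2⟩ := ihu' ψ1 b1 _ htr2 σ hs2.2 hl.2
      cases o1 with
      | none => exact hopt1.elim
      | some x'' =>
        cases o2 with
        | none => exact hopt2.elim
        | some y'' =>
          refine ⟨ψa.conj ψb, some (.par x'' y''), by simp [eval, hev1, hev2],
            .parCSS htr1' htr2' hγ ?_ hsv ?_, Cong.par hopt1 hopt2⟩
          · exact notEqBot_of (σ := σ) (v_conj_ne' (hev1 ▸ hl.1) (hev2 ▸ hl.2))
          · exact fequiv_notbot
              (fequiv_conj (cong_sig γ actF effF sigF hR hR' hopt1)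
                (cong_sig γ actF effF sigF hR hR' hopt2)) h2
  | @lm u v u' v' hu hu' ihu ihu' =>
    intro φ a o htr σ hs hφ
    have hequ := cong_sig γ actF effF sigF hR hR' hu
    have hequ' := cong_sig γ actF effF sigF hR hR' hu'
    have hsv : ¬ EqBot (sigS sigF (SPT.lm v v')) :=
      fequiv_notbot (fequiv_conj hequ hequ') (notEqBot_of hs)
    have hs2 := v_conj_ne (x := eval σ (sigS sigF u)) (y := eval σ (sigS sigF u')) hs
    cases htr with
    | lmT _ htr h1 h2 =>
      obtain ⟨ψ, o', hev, htr', hopt⟩ := ihu φ a none htr σ hs2.1 hφ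
      cases o' with
      | some z => exact hopt.elim
      | none =>
        exact ⟨ψ, some v', hev, .lmT v' htr' hsv (fequiv_notbot hequ' h2), hu'⟩
    | lmS _ htr h1 h2 =>
      obtain ⟨ψ, o', hev, htr', hopt⟩ := ihu φ a _ htr σ hs2.1 hφ
      cases o' with
      | none => exact hopt.elim
      | some y' =>
        refine ⟨ψ, some (.par y' v'), hev, .lmS v' htr' hsv ?_, Cong.par hopt hu'⟩
        exact fequiv_notbot
          (fequiv_conj (cong_sig γ actF effF sigF hR hR' hopt) hequ') h2
  | @cm u v u' v' hu hu' ihu ihu' =>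
    intro φ a o htr σ hs hφ
    have hequ := cong_sig γ actF effF sigF hR hR' hu
    have hequ' := cong_sig γ actF effF sigF hR hR' hu'
    have hsv : ¬ EqBot (sigS sigF (SPT.cm v v')) :=
      fequiv_notbot (fequiv_conj hequ hequ') (notEqBot_of hs)
    have hs2 := v_conj_ne (x := eval σ (sigS sigF u)) (y := eval σ (sigS sigF u')) hs
    cases htr with
    | cmTT htr1 htr2 hγ hlab h1 =>
      rename_i φ1 ψ1 a1 b1
      have hl := v_conj_ne (x := eval σ φ1) (y := eval σ ψ1) hφ
      obtain ⟨ψa, o1, hev1, htr1', hopt1⟩ := ihu φ1 a1 none htr1 σ hs2.1 hl.1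
      obtain ⟨ψb, o2, hev2, htr2', hopt2⟩ := ihu' ψ1 b1 none htr2 σ hs2.2 hl.2
      cases o1 with
      | some z => exact hopt1.elim
      | none =>
        cases o2 with
        | some z => exact hopt2.elim
        | none =>
          refine ⟨ψa.conj ψb, none, by simp [eval, hev1, hev2],
            .cmTT htr1' htr2' hγ ?_ hsv, trivial⟩
          exact notEqBot_of (σ := σ) (v_conj_ne' (hev1 ▸ hl.1) (hev2 ▸ hl.2))
    | cmTS htr1 htr2 hγ hlab h1 =>
      rename_i φ1 ψ1 a1 b1 y'
      have hl := v_conj_ne (x := eval σ φ1) (y := eval σ ψ1) hφ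
      obtain ⟨ψa, o1, hev1, htr1', hopt1⟩ := ihu φ1 a1 none htr1 σ hs2.1 hl.1
      obtain ⟨ψb, o2, hev2, htr2', hopt2⟩ := ihu' ψ1 b1 _ htr2 σ hs2.2 hl.2
      cases o1 with
      | some z => exact hopt1.elim
      | none =>
        cases o2 with
        | none => exact hopt2.elim
        | some y'' =>
          refine ⟨ψa.conj ψb, some y'', by simp [eval, hev1, hev2],
            .cmTS htr1' htr2' hγ ?_ hsv, hopt2⟩
          exact notEqBot_of (σ := σ) (v_conj_ne' (hev1 ▸ hl.1) (hev2 ▸ hl.2))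
    | cmST htr1 htr2 hγ hlab h1 =>
      rename_i φ1 ψ1 a1 b1 x'
      have hl := v_conj_ne (x := eval σ φ1) (y := eval σ ψ1) hφ
      obtain ⟨ψa, o1, hev1, htr1', hopt1⟩ := ihu φ1 a1 _ htr1 σ hs2.1 hl.1
      obtain ⟨ψb, o2, hev2, htr2', hopt2⟩ := ihu' ψ1 b1 none htr2 σ hs2.2 hl.2
      cases o2 with
      | some z => exact hopt2.elim
      | none =>
        cases o1 with
        | none => exact hopt1.elim
        | some x'' =>
          refine ⟨ψa.conj ψb, some x'', by simp [eval, hev1, hev2],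
            .cmST htr1' htr2' hγ ?_ hsv, hopt1⟩
          exact notEqBot_of (σ := σ) (v_conj_ne' (hev1 ▸ hl.1) (hev2 ▸ hl.2))
    | cmSS htr1 htr2 hγ hlab h1 h2 =>
      rename_i φ1 ψ1 a1 b1 x' y'
      have hl := v_conj_ne (x := eval σ φ1) (y := eval σ ψ1) hφ
      obtain ⟨ψa, o1, hev1, htr1', hopt1⟩ := ihu φ1 a1 _ htr1 σ hs2.1 hl.1
      obtain ⟨ψb, o2, hev2, htr2', hopt2⟩ := ihu' ψ1 b1 _ htr2 σ hs2.2 hl.2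
      cases o1 with
      | none => exact hopt1.elim
      | some x'' =>
        cases o2 with
        | none => exact hopt2.elim
        | some y'' =>
          refine ⟨ψa.conj ψb, some (.par x'' y''), by simp [eval, hev1, hev2],
            .cmSS htr1' htr2' hγ ?_ hsv ?_, Cong.par hopt1 hopt2⟩
          · exact notEqBot_of (σ := σ) (v_conj_ne' (hev1 ▸ hl.1) (hev2 ▸ hl.2))
          · exact fequiv_notbot
              (fequiv_conj (cong_sig γ actF effF sigF hR hR' hopt1)
                (cong_sig γ actF effF sigF hR hR' hopt2)) h2
  | @encap H u v hu ihu =>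
    intro φ a o htr σ hs hφ
    cases htr with
    | encapR _ htr hnot =>
      rename_i o0
      obtain ⟨ψ, o', hev, htr', hopt⟩ := ihu φ a o0 htr σ hs hφ
      refine ⟨ψ, Option.map (SPT.encap H) o', hev, .encapR H htr' hnot, ?_⟩
      cases o0 with
      | none =>
        cases o' with
        | none => trivial
        | some z => exact hopt.elim
      | some x' =>
        cases o' with
        | none => exact hopt.elim
        | some y' => exact Cong.encap H hopt
  | @st s u v hu ihu =>
    intro φ a o htr σ hs hφ
    have hequ := cong_sig γ actF effF sigF hR hR' hu
    have hsv : ¬ EqBot (sigS sigF (SPT.st s v)) :=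
      fequiv_notbot (fequiv_conj hequ (fequiv_refl (sigF s))) (notEqBot_of hs)
    have hs2 := v_conj_ne (x := eval σ (sigS sigF u)) (y := eval σ (sigF s)) hs
    cases htr with
    | stT _ htr hact h1 =>
      rename_i a1
      obtain ⟨ψ, o', hev, htr', hopt⟩ := ihu φ a1 none htr σ hs2.1 hφ
      cases o' with
      | some z => exact hopt.elim
      | none => exact ⟨ψ, none, hev, .stT s htr' hact hsv, trivial⟩
    | stS _ htr hact h1 h2 =>
      rename_i a1 x'
      obtain ⟨ψ, o', hev, htr', hopt⟩ := ihu φ a1 _ htr σ hs2.1 hφ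
      cases o' with
      | none => exact hopt.elim
      | some y' =>
        refine ⟨ψ, some (.st (effF (some a1) s) y'), hev,
          .stS s htr' hact hsv ?_, Cong.st _ hopt⟩
        exact fequiv_notbot
          (fequiv_conj (cong_sig γ actF effF sigF hR hR' hopt)
            (fequiv_refl (sigF (effF (some a1) s)))) h2

end Aux

/-- Bisimulation equivalence is a congruence for the operators of ctACPps+SO. -/
theorem ctACPpsSO_congruence {α Act S : Type} [Fintype α] [Fintype Act]
    (γ : Option Act → Option Act → Option Act)
    (hγcomm : ∀ a b, γ a b = γ b a)
    (hγassoc : ∀ a b c, γ (γ a b) c = γ a (γ b c))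
    (hγdelta : ∀ a, γ none a = none)
    (actF : Option Act → S → Option Act) (effF : Option Act → S → S)
    (sigF : S → Fml α)
    (hactdelta : ∀ s, actF none s = none)
    (p q p' q' : SPT α Act S) (φ : Fml α) (H : Set Act) (s : S)
    (h : SBisim γ actF effF sigF p q) (h' : SBisim γ actF effF sigF p' q') :
    SBisim γ actF effF sigF (.alt p p') (.alt q q') ∧
    SBisim γ actF effF sigF (.seq p p') (.seq q q') ∧
    SBisim γ actF effF sigF (.gc φ p) (.gc φ q) ∧
    SBisim γ actF effF sigF (.se φ p) (.se φ q) ∧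
    SBisim γ actF effF sigF (.par p p') (.par q q') ∧
    SBisim γ actF effF sigF (.lm p p') (.lm q q') ∧
    SBisim γ actF effF sigF (.cm p p') (.cm q q') ∧
    SBisim γ actF effF sigF (.encap H p) (.encap H q) ∧
    SBisim γ actF effF sigF (.st s p) (.st s q) := by
  obtain ⟨R, hR, hpq⟩ := h
  obtain ⟨R', hR', hpq'⟩ := h'
  have hRf := isbisim_flip γ actF effF sigF hR
  have hR'f := isbisim_flip γ actF effF sigF hR'
  have key : SIsBisim γ actF effF sigF (Cong R R') := by
    intro u v huv
    refine ⟨⟨cong_fwd γ actF effF sigF hR hR' huv,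
      cong_sig γ actF effF sigF hR hR' huv⟩,
      ⟨?_, fun σ => (cong_sig γ actF effF sigF hR hR' huv σ).symm⟩⟩
    intro φ0 a o htr σ hs hφ0
    obtain ⟨ψ, o', hev, htr', hopt⟩ :=
      cong_fwd γ actF effF sigF hRf hR'f (cong_flip huv) φ0 a o htr σ hs hφ0
    exact ⟨ψ, o', hev, htr', soptr_mono (fun a b hab => cong_flip hab) hopt⟩
  exact ⟨⟨_, key, .alt (.base1 hpq) (.base2 hpq')⟩,
    ⟨_, key, .seq (.base1 hpq) (.base2 hpq')⟩,
    ⟨_, key, .gc φ (.base1 hpq)⟩,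
    ⟨_, key, .se φ (.base1 hpq)⟩,
    ⟨_, key, .par (.base1 hpq) (.base2 hpq')⟩,
    ⟨_, key, .lm (.base1 hpq) (.base2 hpq')⟩,
    ⟨_, key, .cm (.base1 hpq) (.base2 hpq')⟩,
    ⟨_, key, .encap H (.base1 hpq)⟩,
    ⟨_, key, .st s (.base1 hpq)⟩⟩
end
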